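/- In U_q(sl2), the shifted extremal projector satisfies f·π(s) = π(s−1) · (q^{h+2}[s]_q/[s−2−h]_q) · f as an identity of operators on every highest weight module for which all coefficients are defined. -/

import Mathlib

open Finset

noncomputable section

/-- `(u - u⁻¹)/(q - q⁻¹)`; with `u = q^z` this is the q-number `[z]_q`. -/
def qNum (q u : ℂ) : ℂ := (u - u⁻¹) / (q - q⁻¹)

/-- q-factorial `[k]_q!`. -/
def qFact (q : ℂ) (k : ℕ) : ℂ := ∏ i ∈ Finset.range k, qNum q (q ^ (i + 1))

/-- the intertwining relation `f·π(s) = π(s-1)·(q^{h+2}[s]_q/[s-2-h]_q)·f`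
for the shifted extremal projector, as operators on a highest weight `U_q(sl2)`-module,
evaluated on a weight vector `v` with `K v = κ • v` (the `h`-dependent scalars are
evaluated on the weights; `t = q^s`, and `F v` has `K`-eigenvalue `κ q^{-2}`). -/
lemma aux_comm {V : Type*} [AddCommGroup V] [Module ℂ V]
    (q : ℂ) (hq0 : q ≠ 0) (E F K Ki : Module.End ℂ V)
    (hKi : Ki * K = 1) (hKE : K * E = (q ^ 2) • (E * K))
    (hEF : E * F - F * E = (q - q⁻¹)⁻¹ • (K - Ki)) :
    ∀ (k : ℕ) (v : V) (κ : ℂ), κ ≠ 0 → K v = κ • v →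
      (E ^ (k+1)) (F v) = F ((E ^ (k+1)) v) +
        ((q - q⁻¹)⁻¹ * ∑ m ∈ range (k+1),
          (κ * (q^2)^m - κ⁻¹ * ((q^2)^m)⁻¹)) • (E ^ k) v := by
  intro k
  induction k with
  | zero =>
    intro v κ hκ hKv
    have hKiv : Ki v = κ⁻¹ • v := by
      have h1 : Ki (K v) = v := by
        have := congrArg (fun A => A v) hKi; simpa using this
      rw [hKv, map_smul] at h1
      have := congrArg (fun w => κ⁻¹ • w) h1
      simpa [smul_smul, inv_mul_cancel₀ hκ] using this
    have h2 : E (F v) - F (E v) = (q - q⁻¹)⁻¹ • (K v - Ki v) := by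
      have := congrArg (fun A => A v) hEF; simpa using this
    rw [hKv, hKiv] at h2
    have h3 : E (F v) = F (E v) + (q - q⁻¹)⁻¹ • (κ • v - κ⁻¹ • v) := by
      rw [← h2]; abel
    simpa [pow_one, smul_sub, smul_smul, mul_sub, sub_smul] using h3
  | succ k ih =>
    intro v κ hκ hKv
    have hKEv : K (E v) = (q^2 * κ) • E v := by
      have h1 : K (E v) = (q^2) • E (K v) := by
        have := congrArg (fun A => A v) hKE; simpa using this
      rw [hKv, map_smul, smul_smul] at h1; exact h1
    have hEFv : E (F v) = F (E v) + ((q - q⁻¹)⁻¹ * (κ - κ⁻¹)) • v := by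
      have hKiv : Ki v = κ⁻¹ • v := by
        have h1 : Ki (K v) = v := by
          have := congrArg (fun A => A v) hKi; simpa using this
        rw [hKv, map_smul] at h1
        have := congrArg (fun w => κ⁻¹ • w) h1
        simpa [smul_smul, inv_mul_cancel₀ hκ] using this
      have h2 : E (F v) - F (E v) = (q - q⁻¹)⁻¹ • (K v - Ki v) := by
        have := congrArg (fun A => A v) hEF; simpa using this
      rw [hKv, hKiv] at h2
      have h3 : E (F v) = F (E v) + (q - q⁻¹)⁻¹ • (κ • v - κ⁻¹ • v) := by
        rw [← h2]; abel
      simpa [smul_sub, smul_smul, mul_sub, sub_smul] using h3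
    have hq2κ : q^2 * κ ≠ 0 := mul_ne_zero (pow_ne_zero 2 hq0) hκ
    have ihEv := ih (E v) (q^2 * κ) hq2κ hKEv
    have hstep : (E ^ (k+2)) (F v) = (E ^ (k+1)) (E (F v)) := by
      rw [show E ^ (k+2) = E ^ (k+1) * E by rw [pow_succ]]
      rfl
    rw [hstep, hEFv, map_add, map_smul, ihEv]
    have hE1 : (E ^ (k+1)) (E v) = (E ^ (k+2)) v := by
      rw [show E ^ (k+2) = E ^ (k+1) * E by rw [pow_succ]]; rfl
    have hE2 : (E ^ k) (E v) = (E ^ (k+1)) v := by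
      rw [show E ^ (k+1) = E ^ k * E by rw [pow_succ]]; rfl
    rw [hE1, hE2]
    rw [add_assoc, ← add_smul]
    congr 2
    rw [Finset.sum_range_succ' (fun m => (κ * (q^2)^m - κ⁻¹ * ((q^2)^m)⁻¹)) (k+1)]
    rw [mul_add]
    congr 1
    · rw [Finset.mul_sum, Finset.mul_sum]
      refine Finset.sum_congr rfl fun m _ => ?_
      field_simp
      ring
    · simp

lemma sum_closed (q κ : ℂ) (hq0 : q ≠ 0) (hκ : κ ≠ 0) (hqq : q - q⁻¹ ≠ 0) :
    ∀ k : ℕ, (∑ m ∈ range (k+1), (κ * (q^2)^m - κ⁻¹ * ((q^2)^m)⁻¹)) * (q - q⁻¹)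
      = (q^(k+1) - (q^(k+1))⁻¹) * (κ * q^k - κ⁻¹ * (q^k)⁻¹) := by
  intro k
  induction k with
  | zero => simp; field_simp
  | succ k ih =>
    rw [Finset.sum_range_succ, add_mul, ih]
    have hgk : (q:ℂ)^k ≠ 0 := pow_ne_zero _ hq0
    have e1 : (q:ℂ)^(k+1) = q^k * q := by rw [pow_succ]
    have e2 : (q:ℂ)^(k+2) = q^k * q^2 := by ring
    have e3 : ((q:ℂ)^2)^(k+1) = (q^k)^2 * q^2 := by rw [pow_succ]; ring
    rw [e1, e2, e3]
    generalize (q:ℂ)^k = g at hgk ⊢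
    field_simp
    ring_nf

lemma scalar_key (t κ g Fk P Q r s d e u m S X : ℂ)
    (ht : t ≠ 0) (hκ : κ ≠ 0) (hg : g ≠ 0) (hX : X ≠ 0)
    (hF : Fk ≠ 0) (hP : P ≠ 0) (hQ : Q ≠ 0) (hr : r ≠ 0) (hs : s ≠ 0)
    (hd : d ≠ 0) (he : e ≠ 0)
    (hrel : Q * r = s * P)
    (hrval : r * X = t * g - (t * g)⁻¹)
    (hdval : d * X = t * κ⁻¹ - (t * κ⁻¹)⁻¹)
    (hSval : S = e * (κ * g - κ⁻¹ * g⁻¹)) :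
    m * u / (Fk * P) = κ * s / d * (m * (u * g) / (Fk * Q))
      + κ * s / d * ((m * -1) * (u * g * (t * κ⁻¹)) / ((Fk * e) * (Q * r)))
        * (X⁻¹ * S) := by
  set W : ℂ := κ * g - κ⁻¹ * g⁻¹ with hW
  have hcore : d * X = κ * g * (r * X) - g * t * W := by
    rw [hdval, hrval, hW]; field_simp; ring
  have hT1 : κ * s / d * (m * (u * g) / (Fk * Q))
      = κ * (m * u * g) * r * X / (d * (Fk * P) * X) := by
    rw [div_mul_div_comm]
    have h1 : κ * s * (m * (u * g)) / (d * (Fk * Q))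
        = κ * s * (m * (u * g)) * r / (d * (Fk * Q) * r) :=
      (mul_div_mul_right _ _ hr).symm
    rw [h1]
    have h2 : d * (Fk * Q) * r = d * (Fk * (Q * r)) := by ring
    rw [h2, hrel]
    have h3 : κ * s * (m * (u * g)) * r / (d * (Fk * (s * P)))
        = s * (κ * (m * u * g) * r) / (s * (d * (Fk * P))) := by ring_nf
    rw [h3, mul_div_mul_left _ _ hs]
    exact (mul_div_mul_right _ _ hX).symm
  have hT2 : κ * s / d * ((m * -1) * (u * g * (t * κ⁻¹)) / ((Fk * e) * (Q * r)))
        * (X⁻¹ * S)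
      = -(m * u * g * t * W) / (d * (Fk * P) * X) := by
    rw [hSval, inv_mul_eq_div, div_mul_div_comm, div_mul_div_comm, hrel]
    have hnum : κ * s * ((m * -1) * (u * g * (t * κ⁻¹))) * (e * W)
        = (s * e) * (κ * κ⁻¹) * (-(m * u * g * t * W)) := by ring
    have hden : d * (Fk * e * (s * P)) * X = (s * e) * (d * (Fk * P) * X) := by ring
    rw [hnum, hden, mul_inv_cancel₀ hκ, mul_one, mul_div_mul_left _ _ (mul_ne_zero hs he)]
  rw [hT1, hT2, ← add_div]
  have hnum2 : κ * (m * u * g) * r * X + -(m * u * g * t * W)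
      = m * u * (κ * g * (r * X) - g * t * W) := by ring
  have hden2 : d * (Fk * P) * X = (Fk * P) * (d * X) := by ring
  rw [hnum2, ← hcore, hden2, mul_div_mul_right _ _ (mul_ne_zero hd hX)]

theorem f_intertwining_relation {V : Type*} [AddCommGroup V] [Module ℂ V]
    (q t κ : ℂ) (hq0 : q ≠ 0) (hq : ∀ n : ℕ, 0 < n → q ^ n ≠ 1) (ht : t ≠ 0) (hκ : κ ≠ 0)
    (E F K Ki : Module.End ℂ V)
    (hK : K * Ki = 1) (hKi : Ki * K = 1)
    (hKE : K * E = (q ^ 2) • (E * K)) (hKF : K * F = (q ^ 2)⁻¹ • (F * K))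
    (hEF : E * F - F * E = (q - q⁻¹)⁻¹ • (K - Ki))
    (v : V) (hKv : K v = κ • v) (N : ℕ) (hnil : (E ^ (N + 1)) v = 0)
    (hden : ∀ i : ℕ, i ≤ N + 1 → qNum q (t * q ^ (i : ℤ)) ≠ 0)
    (hden' : qNum q (t * κ⁻¹) ≠ 0) :
    F (∑ k ∈ range (N + 1),
        ((-1 : ℂ) ^ k * (t * (q * κ)⁻¹) ^ k /
            (qFact q k * ∏ i ∈ range k, qNum q (t * q ^ ((i : ℤ) + 1)))) •
          (F ^ k) ((E ^ k) v))
      = ∑ k ∈ range (N + 2),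
          ((-1 : ℂ) ^ k * (t * q⁻¹ * (q * (κ * (q ^ 2)⁻¹))⁻¹) ^ k /
              (qFact q k * ∏ i ∈ range k, qNum q (t * q⁻¹ * q ^ ((i : ℤ) + 1)))) •
            (F ^ k) ((E ^ k)
              ((κ * qNum q t / qNum q (t * κ⁻¹)) • F v)) := by
  have hqq : q - q⁻¹ ≠ 0 := by
    intro h0
    apply hq 2 (by norm_num)
    have h1 : q = q⁻¹ := sub_eq_zero.mp h0
    rw [sq]
    nth_rewrite 2 [h1]
    exact mul_inv_cancel₀ hq0
  have hqNumPow : ∀ n : ℕ, 0 < n → qNum q (q ^ n) ≠ 0 := by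
    intro n hn
    rw [qNum]
    apply div_ne_zero _ hqq
    intro h0
    have h1 : (q:ℂ)^n = (q^n)⁻¹ := sub_eq_zero.mp h0
    apply hq (2*n) (by positivity)
    calc (q:ℂ)^(2*n) = q^n * q^n := by rw [two_mul, pow_add]
      _ = q^n * (q^n)⁻¹ := by rw [← h1]
      _ = 1 := mul_inv_cancel₀ (pow_ne_zero n hq0)
  have hFk : ∀ k : ℕ, qFact q k ≠ 0 := by
    intro k
    rw [qFact]
    exact Finset.prod_ne_zero_iff.mpr fun i _ => hqNumPow (i+1) (Nat.succ_pos i)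
  have hP : ∀ k : ℕ, k ≤ N + 1 → (∏ i ∈ range k, qNum q (t * q ^ ((i:ℤ) + 1))) ≠ 0 := by
    intro k hk
    refine Finset.prod_ne_zero_iff.mpr fun i hi => ?_
    have hcast : ((i:ℤ) + 1) = ((i+1 : ℕ) : ℤ) := by push_cast; ring
    rw [hcast]
    exact hden (i+1) (by have := mem_range.mp hi; omega)
  have hQ : ∀ k : ℕ, k ≤ N + 1 → (∏ i ∈ range k, qNum q (t * q ^ (i:ℤ))) ≠ 0 := by
    intro k hk
    exact Finset.prod_ne_zero_iff.mpr fun i hi =>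
      hden i (by have := mem_range.mp hi; omega)
  have hsne : qNum q t ≠ 0 := by
    have := hden 0 (by omega)
    simpa using this
  -- normalize the arguments on the RHS
  have harg : ∀ i : ℕ, t * q⁻¹ * q ^ ((i:ℤ) + 1) = t * q ^ (i:ℤ) := by
    intro i
    rw [mul_assoc]
    congr 1
    rw [← zpow_neg_one q, ← zpow_add₀ hq0]
    congr 1
    ring
  have hbase : t * q⁻¹ * (q * (κ * (q ^ 2)⁻¹))⁻¹ = t * κ⁻¹ := by
    field_simp
  simp only [harg, hbase]
  set c : ℂ := κ * qNum q t / qNum q (t * κ⁻¹) with hc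
  -- commutation of E powers past F
  have hEkF : ∀ j : ℕ, (E ^ (j+1)) (F v) = F ((E ^ (j+1)) v) +
      ((q - q⁻¹)⁻¹ * ∑ m ∈ range (j+1),
        (κ * (q^2)^m - κ⁻¹ * ((q^2)^m)⁻¹)) • (E ^ j) v :=
    fun j => aux_comm q hq0 E F K Ki hKi hKE hEF j v κ hκ hKv
  -- abbreviations
  set S' : ℕ → ℂ := fun j => (q - q⁻¹)⁻¹ * ∑ m ∈ range (j+1),
    (κ * (q^2)^m - κ⁻¹ * ((q^2)^m)⁻¹) with hS'
  let Ak : ℕ → ℂ := fun k => (-1 : ℂ) ^ k * (t * (q * κ)⁻¹) ^ k /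
      (qFact q k * ∏ i ∈ range k, qNum q (t * q ^ ((i : ℤ) + 1)))
  let Bk : ℕ → ℂ := fun k => (-1 : ℂ) ^ k * (t * κ⁻¹) ^ k /
      (qFact q k * ∏ i ∈ range k, qNum q (t * q ^ (i : ℤ)))
  show F (∑ k ∈ range (N + 1), Ak k • (F ^ k) ((E ^ k) v))
      = ∑ k ∈ range (N + 2), Bk k • (F ^ k) ((E ^ k) (c • F v))
  -- the key scalar identity
  have key : ∀ k : ℕ, k < N + 1 → Ak k = c * Bk k + c * Bk (k+1) * S' k := by
    intro k hk
    have hg : (q:ℂ)^k ≠ 0 := pow_ne_zero _ hq0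
    have hrk : qNum q (t * q ^ (k:ℤ)) ≠ 0 := hden k (by omega)
    have hek : qNum q (q ^ (k+1)) ≠ 0 := hqNumPow (k+1) (Nat.succ_pos k)
    have hrel : (∏ i ∈ range k, qNum q (t * q ^ (i:ℤ))) * qNum q (t * q ^ (k:ℤ))
        = qNum q t * ∏ i ∈ range k, qNum q (t * q ^ ((i:ℤ) + 1)) := by
      have h1 : ∀ i : ℕ, qNum q (t * q ^ ((i+1 : ℕ):ℤ)) = qNum q (t * q ^ ((i:ℤ) + 1)) := by
        intro i; norm_cast
      rw [← prod_range_succ (fun i => qNum q (t * q ^ (i:ℤ))) k,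
        prod_range_succ' (fun i => qNum q (t * q ^ (i:ℤ))) k]
      rw [mul_comm]
      congr 1
      simp
    have hrval : qNum q (t * q ^ (k:ℤ)) * (q - q⁻¹) = t * q^k - (t * q^k)⁻¹ := by
      rw [qNum, zpow_natCast, div_mul_cancel₀ _ hqq]
    have hdval : qNum q (t * κ⁻¹) * (q - q⁻¹) = t * κ⁻¹ - (t * κ⁻¹)⁻¹ := by
      rw [qNum, div_mul_cancel₀ _ hqq]
    have hSval : (∑ m ∈ range (k+1), (κ * (q^2)^m - κ⁻¹ * ((q^2)^m)⁻¹))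
        = qNum q (q ^ (k+1)) * (κ * q^k - κ⁻¹ * (q^k)⁻¹) := by
      apply mul_right_cancel₀ hqq
      rw [sum_closed q κ hq0 hκ hqq k]
      rw [qNum]
      rw [mul_comm (((q:ℂ)^(k+1) - (q^(k+1))⁻¹) / (q - q⁻¹)) _, mul_assoc,
        div_mul_cancel₀ _ hqq]
      ring
    have hmain := scalar_key t κ (q^k) (qFact q k)
      (∏ i ∈ range k, qNum q (t * q ^ ((i:ℤ) + 1)))
      (∏ i ∈ range k, qNum q (t * q ^ (i:ℤ)))
      (qNum q (t * q ^ (k:ℤ))) (qNum q t) (qNum q (t * κ⁻¹)) (qNum q (q ^ (k+1)))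
      ((t * (q * κ)⁻¹) ^ k) ((-1 : ℂ) ^ k)
      (∑ m ∈ range (k+1), (κ * (q^2)^m - κ⁻¹ * ((q^2)^m)⁻¹))
      (q - q⁻¹)
      ht hκ hg hqq (hFk k) (hP k (by omega)) (hQ k (by omega)) hrk hsne hden' hek
      hrel hrval hdval hSval
    -- rewrite Bk into the shape used by scalar_key
    have hb3 : (t * κ⁻¹) ^ k = (t * (q * κ)⁻¹) ^ k * q ^ k := by
      rw [← mul_pow]
      congr 1
      field_simp
    have hBk : Bk k = (-1 : ℂ) ^ k * ((t * (q * κ)⁻¹) ^ k * q ^ k) /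
        (qFact q k * ∏ i ∈ range k, qNum q (t * q ^ (i:ℤ))) := by
      show (-1 : ℂ) ^ k * (t * κ⁻¹) ^ k / _ = _
      rw [hb3]
    have hqF : qFact q (k+1) = qFact q k * qNum q (q ^ (k+1)) := by
      rw [qFact, qFact]
      exact prod_range_succ _ _
    have hQs : (∏ i ∈ range (k+1), qNum q (t * q ^ (i:ℤ)))
        = (∏ i ∈ range k, qNum q (t * q ^ (i:ℤ))) * qNum q (t * q ^ (k:ℤ)) :=
      prod_range_succ _ _
    have hBk1 : Bk (k+1) = ((-1 : ℂ) ^ k * -1) * ((t * (q * κ)⁻¹) ^ k * q ^ k * (t * κ⁻¹)) /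
        ((qFact q k * qNum q (q ^ (k+1))) *
          ((∏ i ∈ range k, qNum q (t * q ^ (i:ℤ))) * qNum q (t * q ^ (k:ℤ)))) := by
      show (-1 : ℂ) ^ (k+1) * (t * κ⁻¹) ^ (k+1) / (qFact q (k+1) * ∏ i ∈ range (k+1), qNum q (t * q ^ (i:ℤ))) = _
      rw [pow_succ (-1 : ℂ), pow_succ (t * κ⁻¹), hb3, hqF, hQs]
    rw [hBk, hBk1, hc]
    show _ = _
    calc Ak k = (-1:ℂ)^k * (t * (q * κ)⁻¹) ^ k /
        (qFact q k * ∏ i ∈ range k, qNum q (t * q ^ ((i:ℤ) + 1))) := rfl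
      _ = _ := by
        rw [hmain]
  -- left-hand side
  have hL : F (∑ k ∈ range (N + 1), Ak k • (F ^ k) ((E ^ k) v))
      = ∑ k ∈ range (N + 1), Ak k • (F ^ (k+1)) ((E ^ k) v) := by
    rw [map_sum]
    refine sum_congr rfl fun k _ => ?_
    rw [map_smul]
    congr 1
    rw [pow_succ']
    rfl
  -- right-hand side
  have hR : ∑ k ∈ range (N + 2), Bk k • (F ^ k) ((E ^ k) (c • F v))
      = ∑ k ∈ range (N + 1), (c * Bk k + c * Bk (k+1) * S' k) • (F ^ (k+1)) ((E ^ k) v) := by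
    have hterm : ∀ k : ℕ, Bk k • (F ^ k) ((E ^ k) (c • F v))
        = (c * Bk k) • (F ^ k) ((E ^ k) (F v)) := by
      intro k
      rw [map_smul, map_smul, smul_smul, mul_comm]
    calc ∑ k ∈ range (N + 2), Bk k • (F ^ k) ((E ^ k) (c • F v))
        = ∑ k ∈ range (N + 2), (c * Bk k) • (F ^ k) ((E ^ k) (F v)) :=
          sum_congr rfl fun k _ => hterm k
      _ = (∑ j ∈ range (N + 1), (c * Bk (j+1)) • (F ^ (j+1)) ((E ^ (j+1)) (F v)))
            + (c * Bk 0) • (F ^ 0) ((E ^ 0) (F v)) :=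
          sum_range_succ' _ (N+1)
      _ = (∑ j ∈ range (N + 1),
            ((c * Bk (j+1)) • (F ^ (j+2)) ((E ^ (j+1)) v)
              + (c * Bk (j+1) * S' j) • (F ^ (j+1)) ((E ^ j) v)))
            + (c * Bk 0) • F v := by
          refine congrArg₂ (· + ·) (sum_congr rfl fun j _ => ?_) rfl
          rw [hEkF j, map_add, map_smul, smul_add, smul_smul]
          rfl
      _ = ((∑ j ∈ range (N + 1), (c * Bk (j+1)) • (F ^ (j+2)) ((E ^ (j+1)) v))
            + (c * Bk 0) • F v)
            + ∑ j ∈ range (N + 1), (c * Bk (j+1) * S' j) • (F ^ (j+1)) ((E ^ j) v) := by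
          rw [sum_add_distrib]; abel
      _ = (∑ k ∈ range (N + 1), (c * Bk k) • (F ^ (k+1)) ((E ^ k) v))
            + ∑ j ∈ range (N + 1), (c * Bk (j+1) * S' j) • (F ^ (j+1)) ((E ^ j) v) := by
          congr 1
          have h5 : ∑ j ∈ range (N + 1), (c * Bk (j+1)) • (F ^ (j+2)) ((E ^ (j+1)) v)
              = ∑ j ∈ range N, (c * Bk (j+1)) • (F ^ (j+2)) ((E ^ (j+1)) v) := by
            rw [sum_range_succ, hnil]
            simp
          rw [h5, sum_range_succ' (fun k => (c * Bk k) • (F ^ (k+1)) ((E ^ k) v)) N]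
          congr 1
      _ = ∑ k ∈ range (N + 1), (c * Bk k + c * Bk (k+1) * S' k) • (F ^ (k+1)) ((E ^ k) v) := by
          rw [← sum_add_distrib]
          refine sum_congr rfl fun k _ => ?_
          rw [add_smul]
  rw [hL, hR]
  exact sum_congr rfl fun k hk => by rw [key k (mem_range.mp hk)]
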